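/- Let G be a t-connected chordal graph with t ≥ 2 and threshold function θ satisfying θ(x) ≤ t for all vertices x. If S ⊆ V(G) induces a complete subgraph of size t in G, then the activation closure of S under θ equals V(G). -/

import Mathlib

/-- A set `A` is closed under activation: every vertex with at least `θ v`
neighbors in `A` already belongs to `A`. -/
def activationClosed {V : Type*} [Fintype V] (G : SimpleGraph V) (θ : V → ℤ)
    (A : Set V) : Prop :=
  ∀ v : V, θ v ≤ ((A ∩ G.neighborSet v).ncard : ℤ) → v ∈ A

/-- The activation closure `[S]_θ`: the smallest activation-closed superset of `S`. -/
def activationClosure {V : Type*} [Fintype V] (G : SimpleGraph V) (θ : V → ℤ)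
    (S : Set V) : Set V :=
  ⋂₀ {A : Set V | S ⊆ A ∧ activationClosed G θ A}

/-- `min-seed(G, θ)`: the minimum size of a target set influencing all of `G`. -/
noncomputable def minSeed {V : Type*} [Fintype V] (G : SimpleGraph V)
    (θ : V → ℤ) : ℕ :=
  sInf {m : ℕ | ∃ S : Set V, activationClosure G θ S = Set.univ ∧ S.ncard = m}

/-- A graph is chordal if it contains no induced cycle of length greater than 3. -/
def IsChordal {V : Type*} (G : SimpleGraph V) : Prop :=
  ∀ n : ℕ, 4 ≤ n → IsEmpty (SimpleGraph.cycleGraph n ↪g G)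

/-- `G` is `t`-connected: more than `t` vertices, and deleting any fewer than `t`
vertices leaves a connected graph. -/
def TConnected {V : Type*} [Fintype V] (G : SimpleGraph V) (t : ℕ) : Prop :=
  t < Fintype.card V ∧
    ∀ K : Set V, K.ncard < t → (G.induce (Kᶜ : Set V)).Connected


open SimpleGraph

namespace TSSAux

variable {V : Type*}

/-- There is a `G`-walk from `a` to `b` all of whose vertices lie in `s`. -/
def ReachIn (G : SimpleGraph V) (s : Set V) (a b : V) : Prop :=
  ∃ w : G.Walk a b, ∀ x ∈ w.support, x ∈ s

lemma ReachIn.mem_right {G : SimpleGraph V} {s : Set V} {a b : V} (h : ReachIn G s a b) :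
    b ∈ s := by obtain ⟨w, hw⟩ := h; exact hw _ w.end_mem_support

lemma ReachIn.mem_left {G : SimpleGraph V} {s : Set V} {a b : V} (h : ReachIn G s a b) :
    a ∈ s := by obtain ⟨w, hw⟩ := h; exact hw _ w.start_mem_support

lemma ReachIn.refl {G : SimpleGraph V} {s : Set V} {a : V} (ha : a ∈ s) : ReachIn G s a a :=
  ⟨Walk.nil, by simp [ha]⟩

lemma ReachIn.symm {G : SimpleGraph V} {s : Set V} {a b : V} (h : ReachIn G s a b) :
    ReachIn G s b a := by
  obtain ⟨w, hw⟩ := h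
  exact ⟨w.reverse, by simpa [Walk.support_reverse] using hw⟩

lemma ReachIn.trans {G : SimpleGraph V} {s : Set V} {a b c : V} (h : ReachIn G s a b)
    (h' : ReachIn G s b c) : ReachIn G s a c := by
  obtain ⟨w, hw⟩ := h; obtain ⟨w', hw'⟩ := h'
  refine ⟨w.append w', ?_⟩
  intro x hx
  rcases (Walk.mem_support_append_iff _ _).1 hx with h | h
  · exact hw _ h
  · exact hw' _ h

lemma ReachIn.cons {G : SimpleGraph V} {s : Set V} {a b c : V} (ha : a ∈ s)
    (hadj : G.Adj a b) (h : ReachIn G s b c) : ReachIn G s a c := by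
  obtain ⟨w, hw⟩ := h
  exact ⟨Walk.cons hadj w, by intro x hx; rcases List.mem_cons.1 (by simpa using hx) with rfl | hx
                              exacts [ha, hw _ hx]⟩

lemma ReachIn.concat {G : SimpleGraph V} {s : Set V} {a b c : V} (h : ReachIn G s a b)
    (hadj : G.Adj b c) (hc : c ∈ s) : ReachIn G s a c :=
  (h.symm.cons hc hadj.symm |>.symm)

/-- Every vertex on a walk inside `s` starting at an `s`-reachable vertex is reachable. -/
lemma reachIn_all_support {G : SimpleGraph V} {s : Set V} {a : V} :
    ∀ {u z : V} (w : G.Walk u z), (∀ x ∈ w.support, x ∈ s) → ReachIn G s a u →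
      ∀ x ∈ w.support, ReachIn G s a x := by
  intro u z w
  induction w with
  | nil => intro hs hu x hx; simp at hx; subst hx; exact hu
  | @cons u c z hadj p ih =>
    intro hs hu x hx
    have hc : ReachIn G s a c := hu.concat hadj (hs _ (by simp))
    rcases List.mem_cons.1 (by simpa using hx) with rfl | hx
    · exact hu
    · exact ih (fun y hy => hs _ (by simp [hy])) hc x hx

/-- Connectivity of an induced subgraph, phrased with walks in the ambient graph. -/
def SetConn (G : SimpleGraph V) (s : Set V) : Prop :=
  s.Nonempty ∧ ∀ a ∈ s, ∀ b ∈ s, ReachIn G s a b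

lemma reachIn_of_induce_reachable {G : SimpleGraph V} {s : Set V} {x y : ↥s}
    (h : (G.induce s).Reachable x y) : ReachIn G s x.1 y.1 := by
  obtain ⟨w⟩ := h
  induction w with
  | nil => exact ReachIn.refl (Subtype.coe_prop _)
  | @cons u c z hadj p ih => exact ReachIn.cons (Subtype.coe_prop _) hadj ih

lemma induce_reachable_of_reachIn {G : SimpleGraph V} {s : Set V} :
    ∀ {a b : V} (w : G.Walk a b) (hw : ∀ x ∈ w.support, x ∈ s),
      (G.induce s).Reachable ⟨a, hw _ w.start_mem_support⟩ ⟨b, hw _ w.end_mem_support⟩ := by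
  intro a b w
  induction w with
  | nil => intro _; rfl
  | @cons u c z hadj p ih =>
    intro hw
    have h1 : (G.induce s).Adj ⟨u, hw _ (Walk.start_mem_support _)⟩
        ⟨c, hw _ (by simp)⟩ := by simpa using hadj
    exact h1.reachable.trans (by
      have := ih (fun x hx => hw _ (by simp [hx]))
      exact this)

lemma induce_connected_iff_setConn {G : SimpleGraph V} {s : Set V} :
    (G.induce s).Connected ↔ SetConn G s := by
  constructor
  · intro hc
    rw [SimpleGraph.connected_iff] at hc
    obtain ⟨hpre, hne⟩ := hc
    obtain ⟨⟨x, hx⟩⟩ := hne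
    exact ⟨⟨x, hx⟩, fun a ha b hb => reachIn_of_induce_reachable (hpre ⟨a, ha⟩ ⟨b, hb⟩)⟩
  · rintro ⟨⟨x, hx⟩, h⟩
    haveI : Nonempty ↥s := ⟨⟨x, hx⟩⟩
    rw [SimpleGraph.connected_iff]
    refine ⟨fun a b => ?_, inferInstance⟩
    obtain ⟨w, hw⟩ := h a.1 a.2 b.1 b.2
    have := induce_reachable_of_reachIn w hw
    simpa using this

/-- Removing a vertex whose neighborhood is a clique preserves `SetConn` walks. -/
lemma reachIn_avoid {G : SimpleGraph V} {v : V}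
    (hv : (G.neighborSet v).Pairwise G.Adj) {s : Set V} :
    ∀ n {a b : V} (w : G.Walk a b), w.length ≤ n → (∀ x ∈ w.support, x ∈ s) →
      a ≠ v → b ≠ v → ReachIn G (s ∩ {v}ᶜ) a b := by
  intro n
  induction n with
  | zero =>
    intro a b w hlen hs ha hb
    cases w with
    | nil => exact ReachIn.refl ⟨hs _ (Walk.start_mem_support _), ha⟩
    | cons h p => simp [Walk.length_cons] at hlen
  | succ n ih =>
    intro a b w hlen hs ha hb
    cases w with
    | nil => exact ReachIn.refl ⟨hs _ (Walk.start_mem_support _), ha⟩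
    | @cons _ c _ h p =>
      by_cases hc : c = v
      · obtain rfl := hc.symm
        cases p with
        | nil => exact absurd rfl hb
        | @cons _ d _ h' q =>
          have hd : d ≠ v := fun hdv => G.irrefl (hdv ▸ h')
          have hq : ReachIn G (s ∩ {v}ᶜ) d b := by
            refine ih q ?_ (fun x hx => hs _ (by simp [hx])) hd hb
            simp [Walk.length_cons] at hlen
            omega
          by_cases had : a = d
          · exact had ▸ hq
          · have : G.Adj a d := hv (by simpa using h.symm) (by simpa using h')
              had
            exact ReachIn.cons ⟨hs _ (Walk.start_mem_support _), ha⟩ this hq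
      · have hc' : ReachIn G (s ∩ {v}ᶜ) c b := by
          refine ih p ?_ (fun x hx => hs _ (by simp [hx])) hc hb
          simp [Walk.length_cons] at hlen; omega
        exact ReachIn.cons ⟨hs _ (Walk.start_mem_support _), ha⟩ h hc'

lemma setConn_avoid {G : SimpleGraph V} {v : V}
    (hv : (G.neighborSet v).Pairwise G.Adj) {s : Set V}
    (hconn : SetConn G s) (hne : (s ∩ {v}ᶜ).Nonempty) : SetConn G (s ∩ {v}ᶜ) := by
  refine ⟨hne, fun a ha b hb => ?_⟩
  obtain ⟨w, hw⟩ := hconn.2 a ha.1 b hb.1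
  exact reachIn_avoid hv w.length w le_rfl hw ha.2 hb.2

lemma mem_image_val_of_mem {s : Set V} {r : Set ↥s} {x : ↥s} (hx : x ∈ r) :
    x.1 ∈ Subtype.val '' r := ⟨x, hx, rfl⟩

lemma mem_of_mem_image_val {s : Set V} {r : Set ↥s} {a : V} (ha : a ∈ Subtype.val '' r)
    (ha' : a ∈ s) : (⟨a, ha'⟩ : ↥s) ∈ r := by
  obtain ⟨x, hx, rfl⟩ := ha
  have : (⟨x.1, ha'⟩ : ↥s) = x := Subtype.ext rfl
  rw [this]
  exact hx

lemma reachIn_induce_up {G : SimpleGraph V} {s : Set V} {r : Set ↥s} :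
    ∀ {x y : ↥s} (w : (G.induce s).Walk x y), (∀ z ∈ w.support, z ∈ r) →
      ReachIn G (Subtype.val '' r) x.1 y.1 := by
  intro x y w
  induction w with
  | nil => exact fun hw => ReachIn.refl (mem_image_val_of_mem (hw _ (by simp)))
  | @cons u c z h p ih =>
    intro hw
    exact ReachIn.cons (mem_image_val_of_mem (hw _ (by simp))) h
      (ih (fun z hz => hw _ (by simp [hz])))

lemma reachIn_induce_down {G : SimpleGraph V} {s : Set V} {r : Set ↥s} :
    ∀ {a b : V} (w : G.Walk a b), (∀ z ∈ w.support, z ∈ Subtype.val '' r) →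
      ∀ (ha : a ∈ s) (hb : b ∈ s), ReachIn (G.induce s) r ⟨a, ha⟩ ⟨b, hb⟩ := by
  intro a b w
  induction w with
  | nil =>
    intro hw ha hb
    exact ReachIn.refl (mem_of_mem_image_val (hw _ (by simp)) ha)
  | @cons u c z h p ih =>
    intro hw ha hb
    have hc : c ∈ Subtype.val '' r := hw _ (by simp)
    have hcs : c ∈ s := by obtain ⟨z, _, rfl⟩ := hc; exact z.2
    have hadj : (G.induce s).Adj ⟨u, ha⟩ ⟨c, hcs⟩ := h
    exact ReachIn.cons (mem_of_mem_image_val (hw _ (by simp)) ha) hadj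
      (ih (fun z hz => hw _ (by simp [hz])) hcs hb)

lemma induce_induce_connected_iff {G : SimpleGraph V} {s : Set V} {r : Set ↥s} :
    ((G.induce s).induce r).Connected ↔ SetConn G (Subtype.val '' r) := by
  rw [induce_connected_iff_setConn]
  constructor
  · rintro ⟨⟨x, hx⟩, h⟩
    refine ⟨⟨x.1, mem_image_val_of_mem hx⟩, ?_⟩
    rintro a ⟨a', ha', rfl⟩ b ⟨b', hb', rfl⟩
    obtain ⟨w, hw⟩ := h a' ha' b' hb'
    exact reachIn_induce_up w hw
  · rintro ⟨⟨x, hx⟩, h⟩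
    obtain ⟨x', hx', rfl⟩ := hx
    refine ⟨⟨x', hx'⟩, fun a ha b hb => ?_⟩
    obtain ⟨w, hw⟩ := h a.1 (mem_image_val_of_mem ha) b.1 (mem_image_val_of_mem hb)
    have := reachIn_induce_down w hw a.2 b.2
    simpa using this

lemma reachIn_pair_adj {G : SimpleGraph V} {x y : V} (hxy : x ≠ y)
    (h : ReachIn G {x, y} x y) : G.Adj x y := by
  obtain ⟨w, hw⟩ := h
  cases w with
  | nil => exact absurd rfl hxy
  | @cons _ c _ h p =>
    have hc : c ∈ ({x, y} : Set V) := hw _ (by simp)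
    rcases hc with rfl | rfl
    · exact absurd h (G.irrefl)
    · exact h

lemma min_degree_of_conn [Fintype V] {G : SimpleGraph V} {t : ℕ}
    (hcard : t < Fintype.card V)
    (hconn : ∀ K : Set V, K.ncard < t → SetConn G Kᶜ) (v : V) :
    t ≤ (G.neighborSet v).ncard := by
  by_contra hdeg
  push_neg at hdeg
  have hsc := hconn _ hdeg
  have hv : v ∈ (G.neighborSet v)ᶜ := fun h => G.irrefl h
  have hw : ∃ w, w ∈ (G.neighborSet v)ᶜ ∧ w ≠ v := by
    by_contra hno
    push_neg at hno
    have hsub : (Set.univ : Set V) ⊆ G.neighborSet v ∪ {v} := by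
      intro z _
      by_cases hz : z ∈ G.neighborSet v
      · exact Or.inl hz
      · exact Or.inr (hno z hz)
    have h1 : (Set.univ : Set V).ncard ≤ (G.neighborSet v ∪ {v}).ncard :=
      Set.ncard_le_ncard hsub (Set.toFinite _)
    have h2 := Set.ncard_union_le (G.neighborSet v) ({v} : Set V)
    rw [Set.ncard_univ, Nat.card_eq_fintype_card] at h1
    rw [Set.ncard_singleton] at h2
    omega
  obtain ⟨w, hwmem, hwv⟩ := hw
  obtain ⟨p, hp⟩ := hsc.2 v hv w hwmem
  cases p with
  | nil => exact hwv rfl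
  | @cons _ c _ h q =>
    exact (hp c (by simp)) h

lemma complete_of_card_le [Fintype V] {G : SimpleGraph V} {t : ℕ} (ht : 2 ≤ t)
    (hcard : Fintype.card V ≤ t + 1)
    (hconn : ∀ K : Set V, K.ncard < t → SetConn G Kᶜ) {x y : V} (hxy : x ≠ y) :
    G.Adj x y := by
  have hK : ({x, y}ᶜ : Set V).ncard < t := by
    have h1 := Set.ncard_add_ncard_compl ({x, y} : Set V)
    rw [Set.ncard_pair hxy, Nat.card_eq_fintype_card] at h1
    omega
  have hsc := hconn _ hK
  rw [compl_compl] at hsc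
  exact reachIn_pair_adj hxy (hsc.2 x (by simp) y (by simp))

/-- `K` separates `a` from `b`. -/
def Sep (G : SimpleGraph V) (K : Set V) (a b : V) : Prop :=
  a ∉ K ∧ b ∉ K ∧ ¬ ReachIn G Kᶜ a b

lemma Sep.symm {G : SimpleGraph V} {K : Set V} {a b : V} (h : Sep G K a b) : Sep G K b a :=
  ⟨h.2.1, h.1, fun hr => h.2.2 hr.symm⟩

lemma sep_exists {G : SimpleGraph V} {a b : V} (hab : a ≠ b) (hnadj : ¬ G.Adj a b) :
    Sep G ({a, b}ᶜ) a b := by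
  refine ⟨by simp, by simp, ?_⟩
  rw [compl_compl]
  exact fun h => hnadj (reachIn_pair_adj hab h)

lemma min_sep_exists [Fintype V] {G : SimpleGraph V} {a b : V} (hab : a ≠ b)
    (hnadj : ¬ G.Adj a b) :
    ∃ K : Set V, Sep G K a b ∧ ∀ K' : Set V, Sep G K' a b → K.ncard ≤ K'.ncard := by
  set T : Set ℕ := {n | ∃ K : Set V, Sep G K a b ∧ K.ncard = n} with hT
  have hne : T.Nonempty := ⟨_, _, sep_exists hab hnadj, rfl⟩
  obtain ⟨K, hK, hKn⟩ := Nat.sInf_mem hne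
  exact ⟨K, hK, fun K' hK' => hKn ▸ Nat.sInf_le ⟨K', hK', rfl⟩⟩

lemma min_sep_neighbor [Fintype V] {G : SimpleGraph V} {a b : V} {K : Set V}
    (hsep : Sep G K a b) (hmin : ∀ K' : Set V, Sep G K' a b → K.ncard ≤ K'.ncard)
    {c : V} (hc : c ∈ K) : ∃ u, ReachIn G Kᶜ a u ∧ G.Adj u c := by
  by_contra hno
  push_neg at hno
  have hsep' : Sep G (K \ {c}) a b := by
    refine ⟨fun h => hsep.1 h.1, fun h => hsep.2.1 h.1, ?_⟩
    rintro ⟨w, hw⟩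
    have key : ∀ {u z : V} (w : G.Walk u z), (∀ x ∈ w.support, x ∈ (K \ {c})ᶜ) →
        ReachIn G Kᶜ a u → ReachIn G Kᶜ a z := by
      intro u z w
      induction w with
      | nil => exact fun _ hu => hu
      | @cons u d z h p ih =>
        intro hs hu
        have hd : d ∈ (K \ {c})ᶜ := hs _ (by simp)
        have hd' : ReachIn G Kᶜ a d := by
          by_cases hdK : d ∈ K
          · have : d = c := by
              by_contra hne
              exact hd ⟨hdK, hne⟩
            exact absurd h (this ▸ hno u hu)
          · exact hu.concat h hdK
        exact ih (fun x hx => hs _ (by simp [hx])) hd'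
    exact hsep.2.2 (key w hw (ReachIn.refl hsep.1))
  have := hmin _ hsep'
  have h2 := Set.ncard_diff_singleton_lt_of_mem hc (Set.toFinite K)
  omega

section Lists

variable {α : Type*} {R : α → α → Prop}

lemma surgery {M : List α} (hM : M.Chain' R) {p q : ℕ} (hpq : p < q) (hq : q < M.length)
    (hR : R (M[p]'(by omega)) (M[q]'hq)) :
    ∃ M' : List α, M'.Chain' R ∧ M'.head? = M.head? ∧ M'.getLast? = M.getLast? ∧
      M'.length = p + 1 + (M.length - q) ∧ ∀ z ∈ M', z ∈ M := by
  have hp : p < M.length := by omega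
  have htake : (M.take (p+1)).length = p + 1 := by rw [List.length_take]; omega
  have hdropne : M.drop q ≠ [] := by
    intro h
    have := List.length_drop (i := q) (l := M)
    rw [h] at this
    simp at this
    omega
  have htakene : M.take (p+1) ≠ [] := by
    intro h
    rw [h] at htake
    simp at htake
  refine ⟨M.take (p+1) ++ M.drop q, ?_, ?_, ?_, ?_, ?_⟩
  · refine List.IsChain.append (hM.take _) (hM.drop _) ?_
    intro a ha b hb
    have hga : (M.take (p+1)).getLast? = some (M[p]'hp) := by
      rw [List.getLast?_eq_getElem?, htake]
      simp only [Nat.add_sub_cancel]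
      rw [List.getElem?_take_of_lt (by omega), List.getElem?_eq_getElem hp]
    have hgb : (M.drop q).head? = some (M[q]'hq) := by
      rw [List.head?_drop]
      simp [List.getElem?_eq_getElem hq]
    rw [hga] at ha
    rw [hgb] at hb
    obtain rfl : a = M[p]'hp := by simpa [eq_comm] using ha
    obtain rfl : b = M[q]'hq := by simpa [eq_comm] using hb
    exact hR
  · rw [List.head?_append_of_ne_nil _ htakene]
    cases M with
    | nil => simp at hq
    | cons m0 M' => simp [List.take_succ_cons]
  · rw [List.getLast?_append_of_ne_nil _ hdropne]
    rw [List.getLast?_eq_getElem?, List.getLast?_eq_getElem?, List.length_drop,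
      List.getElem?_drop]
    congr 1
    omega
  · simp [List.length_append, List.length_take, List.length_drop]
    omega
  · intro z hz
    rcases List.mem_append.1 hz with h | h
    · exact List.mem_of_mem_take h
    · exact List.mem_of_mem_drop h

end Lists

/-- An "induced path" list: no repetitions and no chords. -/
def IndList (G : SimpleGraph V) (M : List V) : Prop :=
  M.Nodup ∧ ∀ p q (hp : p < M.length) (hq : q < M.length), p + 1 < q →
    ¬ G.Adj (M[p]'hp) (M[q]'hq)

lemma extract_indList (G : SimpleGraph V) {x y : V} (Q : V → Prop) (hxy : x ≠ y) :
    ∀ (n : ℕ) (M : List V), M.length = n → M.Chain' G.Adj → M.head? = some x →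
      M.getLast? = some y → (∀ z ∈ M, Q z) →
      ∃ M' : List V, M'.Chain' G.Adj ∧ M'.head? = some x ∧ M'.getLast? = some y ∧
        (∀ z ∈ M', Q z) ∧ IndList G M' := by
  intro n
  induction n using Nat.strong_induction_on with
  | _ n IH =>
  intro M hlen hch hhd hlast hQ
  have hMne : M ≠ [] := by intro h; rw [h] at hhd; simp at hhd
  have hMpos : 0 < M.length := List.length_pos_iff.2 hMne
  have hhd0 : M[0]'hMpos = x := by
    rw [List.head?_eq_some_iff] at hhd
    obtain ⟨t, ht⟩ := hhd
    simp [ht]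
  have hlast0 : M[M.length - 1]'(by omega) = y := by
    rw [List.getLast?_eq_getElem?] at hlast
    rw [List.getElem?_eq_getElem (by omega : M.length - 1 < M.length)] at hlast
    simpa using hlast
  by_cases hdup : ∃ p, ∃ (hp : p < M.length), ∃ q, ∃ (hq : q < M.length), p < q ∧
      (M[p]'hp) = (M[q]'hq)
  · obtain ⟨p, hp, q, hq, hpq, heq⟩ := hdup
    by_cases hq1 : q + 1 < M.length
    · have hadj : G.Adj (M[p]'hp) (M[q+1]'hq1) := by
        have := List.isChain_iff_getElem.1 hch q (by omega)
        simpa [heq] using this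
      obtain ⟨M', h1, h2, h3, h4, h5⟩ := surgery hch (by omega : p < q + 1) hq1 hadj
      have hlt : M'.length < n := by rw [h4]; omega
      exact IH _ (hlen ▸ hlt) M' rfl h1 (h2.trans hhd) (h3.trans hlast)
        (fun z hz => hQ _ (h5 _ hz))
    · -- q = M.length - 1, so M[q] = y
      have hqeq : q = M.length - 1 := by omega
      have hpy : (M[p]'hp) = y := by rw [heq, ← hlast0]; congr 1
      have hp0 : p ≠ 0 := by
        intro h
        subst h
        rw [hhd0] at hpy
        exact hxy hpy
      have hadj : G.Adj (M[p-1]'(by omega)) (M[q]'hq) := by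
        have := List.isChain_iff_getElem.1 hch (p-1) (by omega)
        have h2 : p - 1 + 1 = p := by omega
        rw [← heq]
        simpa [h2] using this
      obtain ⟨M', h1, h2, h3, h4, h5⟩ := surgery hch (by omega : p - 1 < q) hq hadj
      have hlt : M'.length < n := by rw [h4]; omega
      exact IH _ (hlen ▸ hlt) M' rfl h1 (h2.trans hhd) (h3.trans hlast)
        (fun z hz => hQ _ (h5 _ hz))
  · by_cases hchord : ∃ p, ∃ (hp : p < M.length), ∃ q, ∃ (hq : q < M.length), p + 1 < q ∧
        G.Adj (M[p]'hp) (M[q]'hq)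
    · obtain ⟨p, hp, q, hq, hpq, hadj⟩ := hchord
      obtain ⟨M', h1, h2, h3, h4, h5⟩ := surgery hch (by omega : p < q) hq hadj
      have hlt : M'.length < n := by rw [h4]; omega
      exact IH _ (hlen ▸ hlt) M' rfl h1 (h2.trans hhd) (h3.trans hlast)
        (fun z hz => hQ _ (h5 _ hz))
    · push_neg at hdup hchord
      refine ⟨M, hch, hhd, hlast, hQ, ?_, ?_⟩
      · rw [List.nodup_iff_injective_get]
        rintro ⟨i, hi⟩ ⟨j, hj⟩ hij
        simp only [List.get_eq_getElem] at hij
        rcases lt_trichotomy i j with h | h | h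
        · exact absurd hij (hdup i hi j hj h)
        · exact Fin.ext h
        · exact absurd hij.symm (hdup j hj i hi h)
      · intro p q hp hq hpq
        exact hchord p hp q hq hpq

lemma cycle_adj_val {n : ℕ} (hn : 2 ≤ n) {i j : Fin n} :
    (SimpleGraph.cycleGraph n).Adj i j ↔
      (j.val = (i.val + 1) % n ∨ i.val = (j.val + 1) % n) := by
  haveI : NeZero n := ⟨by omega⟩
  have h1 : (1 : Fin n).val = 1 := by
    rw [Fin.val_one']
    exact Nat.mod_eq_of_lt hn
  have key : ∀ a b : Fin n, ((b - a).val = 1 ↔ b.val = (a.val + 1) % n) := by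
    intro a b
    constructor
    · intro h
      have hsub : b - a = 1 := Fin.ext (by rw [h, h1])
      have hb : b = a + 1 := by
        rw [sub_eq_iff_eq_add] at hsub
        rw [hsub, add_comm]
      rw [hb, Fin.add_def, h1]
    · intro h
      have hb : b = a + 1 := Fin.ext (by rw [Fin.add_def, h1]; exact h)
      rw [hb]
      simp only [add_sub_cancel_left]
      exact h1
  rw [SimpleGraph.cycleGraph_adj']
  rw [key j i, key i j]
  exact or_comm

lemma chordal_absurd {G : SimpleGraph V} (hch : IsChordal G) {n : ℕ} (hn : 4 ≤ n)
    (f : Fin n → V) (hinj : Function.Injective f)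
    (hiff : ∀ i j, G.Adj (f i) (f j) ↔ (SimpleGraph.cycleGraph n).Adj i j) : False :=
  (hch n hn).false ⟨⟨f, hinj⟩, hiff _ _⟩

lemma indList_facts {G : SimpleGraph V} {x y : V} {A : Set V} {M : List V}
    (hch : M.Chain' G.Adj) (hhd : M.head? = some x) (hlast : M.getLast? = some y)
    (hQ : ∀ z ∈ M, z = x ∨ z = y ∨ z ∈ A) (hind : IndList G M)
    (hxy : x ≠ y) (hnadj : ¬ G.Adj x y) :
    3 ≤ M.length ∧
    (∀ (h : 0 < M.length), M[0]'h = x) ∧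
    (∀ (h : M.length - 1 < M.length), M[M.length - 1]'h = y) ∧
    (∀ p (hp : 0 < p) (hp' : p < M.length - 1), (M[p]'(by omega)) ∈ A) ∧
    (∀ p q (hp : p < M.length) (hq : q < M.length), p < q →
      (G.Adj (M[p]'hp) (M[q]'hq) ↔ q = p + 1)) := by
  have hMne : M ≠ [] := by intro h; rw [h] at hhd; simp at hhd
  have hMpos : 0 < M.length := List.length_pos_iff.2 hMne
  have hhd0 : M[0]'hMpos = x := by
    rw [List.head?_eq_some_iff] at hhd
    obtain ⟨t, ht⟩ := hhd
    simp [ht]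
  have hlast0 : M[M.length - 1]'(by omega) = y := by
    rw [List.getLast?_eq_getElem?] at hlast
    rw [List.getElem?_eq_getElem (by omega : M.length - 1 < M.length)] at hlast
    simpa using hlast
  have hinj : ∀ p q (hp : p < M.length) (hq : q < M.length),
      (M[p]'hp) = (M[q]'hq) → p = q := by
    intro p q hp hq h
    have := List.nodup_iff_injective_get.1 hind.1
      (a₁ := ⟨p, hp⟩) (a₂ := ⟨q, hq⟩) (by simpa using h)
    simpa using congrArg Fin.val this
  have hlen2 : 2 ≤ M.length := by
    by_contra h
    push_neg at h
    apply hxy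
    rw [← hhd0, ← hlast0]
    congr 1
    omega
  have hchadj : ∀ p (hp : p + 1 < M.length),
      G.Adj (M[p]'(by omega)) (M[p+1]'hp) := by
    intro p hp
    have := List.isChain_iff_getElem.1 hch p (by omega)
    simpa using this
  have hlen3 : 3 ≤ M.length := by
    rcases Nat.lt_or_ge M.length 3 with h | h
    · exfalso
      have h2 : M.length = 2 := by omega
      apply hnadj
      have := hchadj 0 (by omega)
      rw [hhd0] at this
      have hy : M[1]'(by omega) = y := by rw [← hlast0]; congr 1; omega
      rwa [hy] at this
    · exact h
  refine ⟨hlen3, fun _ => hhd0, fun _ => hlast0, ?_, ?_⟩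
  · intro p hp hp'
    have hplen : p < M.length := by omega
    rcases hQ (M[p]'hplen) (List.getElem_mem _) with h | h | h
    · exfalso
      have := hinj p 0 hplen hMpos (by rw [h, hhd0])
      omega
    · exfalso
      have := hinj p (M.length - 1) hplen (by omega) (by rw [h, hlast0])
      omega
    · exact h
  · intro p q hp hq hpq
    constructor
    · intro hadj
      by_contra hne
      exact hind.2 p q hp hq (by omega) hadj
    · rintro rfl
      exact hchadj p hq

lemma mod_pair_iff {n i j : ℕ} (hij : i < j) (hjn : j < n) :
    ((j = (i + 1) % n ∨ i = (j + 1) % n) ↔ (j = i + 1 ∨ (i = 0 ∧ j = n - 1))) := by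
  have h1 : (i + 1) % n = i + 1 := Nat.mod_eq_of_lt (by omega)
  rcases Nat.eq_or_lt_of_le (Nat.succ_le_of_lt hjn) with h | h
  · have h' : j + 1 = n := h
    have h2 : (j + 1) % n = 0 := by rw [h', Nat.mod_self]
    rw [h1, h2]
    omega
  · have h2 : (j + 1) % n = j + 1 := Nat.mod_eq_of_lt h
    rw [h1, h2]
    omega

lemma glue_contradiction {G : SimpleGraph V} (hch : IsChordal G) {x y : V} {A B : Set V}
    (hxy : x ≠ y) (hnadj : ¬ G.Adj x y)
    (hxA : x ∉ A) (hyA : y ∉ A) (hxB : x ∉ B) (hyB : y ∉ B)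
    (hAB : ∀ u ∈ A, ∀ w ∈ B, u ≠ w ∧ ¬ G.Adj u w)
    {MA MB : List V}
    (hA1 : MA.Chain' G.Adj) (hA2 : MA.head? = some x) (hA3 : MA.getLast? = some y)
    (hA4 : ∀ z ∈ MA, z = x ∨ z = y ∨ z ∈ A) (hA5 : IndList G MA)
    (hB1 : MB.Chain' G.Adj) (hB2 : MB.head? = some x) (hB3 : MB.getLast? = some y)
    (hB4 : ∀ z ∈ MB, z = x ∨ z = y ∨ z ∈ B) (hB5 : IndList G MB) : False := by
  obtain ⟨hnA3, hA0, hAy, hAint, hApath⟩ := indList_facts hA1 hA2 hA3 hA4 hA5 hxy hnadj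
  obtain ⟨hnB3, hB0, hBy, hBint, hBpath⟩ := indList_facts hB1 hB2 hB3 hB4 hB5 hxy hnadj
  set nA := MA.length with hnA
  set nB := MB.length with hnBdef
  set n := nA + nB - 2 with hndef
  have hn4 : 4 ≤ n := by omega
  have hbound : ∀ i : Fin n, ¬ ((i : ℕ) < nA) → n - (i : ℕ) < nB := by
    intro i hi
    have := i.isLt
    omega
  set f : Fin n → V := fun i =>
    if h : (i : ℕ) < nA then MA[(i : ℕ)]'h else MB[n - (i : ℕ)]'(hbound i h) with hf
  have hflt : ∀ (i : Fin n) (hi : (i : ℕ) < nA), f i = MA[(i : ℕ)]'hi := by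
    intro i hi
    simp only [hf, dif_pos hi]
  have hfge : ∀ (i : Fin n) (hi : ¬ (i : ℕ) < nA), f i = MB[n - (i : ℕ)]'(hbound i hi) := by
    intro i hi
    simp only [hf, dif_neg hi]
  -- membership of values
  have hBmem : ∀ (i : Fin n) (hi : ¬ (i : ℕ) < nA), f i ∈ B := by
    intro i hi
    rw [hfge i hi]
    refine hBint _ ?_ ?_
    · have := i.isLt; omega
    · have := i.isLt
      push_neg at hi
      omega
  -- injectivity
  have hinjA : ∀ p q (hp : p < nA) (hq : q < nA), (MA[p]'hp) = (MA[q]'hq) → p = q := by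
    intro p q hp hq h
    have := List.nodup_iff_injective_get.1 hA5.1 (a₁ := ⟨p, hp⟩) (a₂ := ⟨q, hq⟩)
      (by simpa using h)
    simpa using congrArg Fin.val this
  have hinjB : ∀ p q (hp : p < nB) (hq : q < nB), (MB[p]'hp) = (MB[q]'hq) → p = q := by
    intro p q hp hq h
    have := List.nodup_iff_injective_get.1 hB5.1 (a₁ := ⟨p, hp⟩) (a₂ := ⟨q, hq⟩)
      (by simpa using h)
    simpa using congrArg Fin.val this
  have hAval : ∀ (i : Fin n) (hi : (i : ℕ) < nA),
      f i = x ∨ f i = y ∨ f i ∈ A := by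
    intro i hi
    rw [hflt i hi]
    exact hA4 _ (List.getElem_mem _)
  have hne_mixed : ∀ (i j : Fin n), (i : ℕ) < nA → ¬ ((j : ℕ) < nA) → f i ≠ f j := by
    intro i j hi hj
    have hjB := hBmem j hj
    rcases hAval i hi with h | h | h
    · rw [h]; exact fun he => hxB (he ▸ hjB)
    · rw [h]; exact fun he => hyB (he ▸ hjB)
    · exact fun he => (hAB _ h _ hjB).1 he
  have hinj : Function.Injective f := by
    intro i j hij
    by_cases hi : (i : ℕ) < nA <;> by_cases hj : (j : ℕ) < nA
    · rw [hflt i hi, hflt j hj] at hij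
      exact Fin.ext (hinjA _ _ hi hj hij)
    · exact absurd hij (hne_mixed i j hi hj)
    · exact absurd hij.symm (hne_mixed j i hj hi)
    · rw [hfge i hi, hfge j hj] at hij
      have hi' := i.isLt
      have hj' := j.isLt
      have := hinjB _ _ (hbound i hi) (hbound j hj) hij
      refine Fin.ext ?_
      omega
  have hgc : ∀ (L : List V) {p q : ℕ} (hp : p < L.length) (hq : q < L.length), p = q →
      L[p]'hp = L[q]'hq := by
    intro L p q hp hq h
    subst h
    rfl
  have hmain : ∀ i j : Fin n, (i : ℕ) < (j : ℕ) →
      (G.Adj (f i) (f j) ↔ (SimpleGraph.cycleGraph n).Adj i j) := by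
    intro i j hij
    have hi' := i.isLt
    have hj' := j.isLt
    rw [cycle_adj_val (by omega), mod_pair_iff hij hj']
    by_cases hj : (j : ℕ) < nA
    · have hi : (i : ℕ) < nA := by omega
      rw [hflt i hi, hflt j hj]
      rw [hApath _ _ hi hj hij]
      omega
    · by_cases hi : (i : ℕ) < nA
      · rw [hflt i hi, hfge j hj]
        have hjge : nA ≤ (j : ℕ) := by omega
        by_cases hi0 : (i : ℕ) = 0
        · have h1 : MA[(i : ℕ)]'hi = MB[0]'(by omega) := by
            rw [hgc MA hi (by omega : 0 < nA) hi0]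
            rw [hA0, ← hB0]
          rw [h1]
          refine (hBpath 0 (n - (j : ℕ)) (by omega) (hbound j hj) (by omega)).trans ?_
          omega
        · by_cases hi1 : (i : ℕ) = nA - 1
          · have h1 : MA[(i : ℕ)]'hi = MB[nB - 1]'(by omega) := by
              rw [hgc MA hi (by omega : nA - 1 < nA) hi1]
              rw [hAy, ← hBy]
            rw [h1]
            refine (G.adj_comm _ _).trans ?_
            refine (hBpath (n - (j : ℕ)) (nB - 1) (hbound j hj) (by omega) (by omega)).trans ?_
            omega
          · have hiA : MA[(i : ℕ)]'hi ∈ A := hAint _ (by omega) (by omega)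
            have hjB : MB[n - (j : ℕ)]'(hbound j hj) ∈ B := hBint _ (by omega) (by omega)
            exact iff_of_false (hAB _ hiA _ hjB).2 (by omega)
      · rw [hfge i hi, hfge j hj]
        refine (G.adj_comm _ _).trans ?_
        refine (hBpath (n - (j : ℕ)) (n - (i : ℕ)) (hbound j hj) (hbound i hi)
          (by omega)).trans ?_
        omega
  refine chordal_absurd hch hn4 f hinj ?_
  intro i j
  rcases lt_trichotomy (i : ℕ) (j : ℕ) with h | h | h
  · exact hmain i j h
  · have hh : i = j := Fin.ext h
    subst hh
    exact iff_of_false (G.irrefl) ((SimpleGraph.cycleGraph n).irrefl)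
  · exact (G.adj_comm _ _).trans ((hmain j i h).trans
      ((SimpleGraph.cycleGraph n).adj_comm _ _).symm)

lemma min_sep_clique [Fintype V] {G : SimpleGraph V} (hch : IsChordal G) {a b : V}
    {K : Set V} (hsep : Sep G K a b)
    (hmin : ∀ K' : Set V, Sep G K' a b → K.ncard ≤ K'.ncard) :
    K.Pairwise G.Adj := by
  intro x hx y hy hxy
  by_contra hnadj
  set A : Set V := {v | ReachIn G Kᶜ a v} with hA
  set B : Set V := {v | ReachIn G Kᶜ b v} with hB
  have hxA : x ∉ A := fun h => (ReachIn.mem_right h) hx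
  have hyA : y ∉ A := fun h => (ReachIn.mem_right h) hy
  have hxB : x ∉ B := fun h => (ReachIn.mem_right h) hx
  have hyB : y ∉ B := fun h => (ReachIn.mem_right h) hy
  have hABne : ∀ u ∈ A, ∀ w ∈ B, u ≠ w ∧ ¬ G.Adj u w := by
    intro u hu w hw
    constructor
    · rintro rfl
      exact hsep.2.2 (hu.trans hw.symm)
    · intro hadj
      exact hsep.2.2 ((hu.concat hadj (ReachIn.mem_right hw)).trans hw.symm)
  have hminb : ∀ K' : Set V, Sep G K' b a → K.ncard ≤ K'.ncard :=
    fun K' h => hmin K' h.symm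
  -- build a path through a component
  have mkM : ∀ (C : Set V) (c : V), C = {v | ReachIn G Kᶜ c v} →
      (∃ ux, ReachIn G Kᶜ c ux ∧ G.Adj ux x) →
      (∃ uy, ReachIn G Kᶜ c uy ∧ G.Adj uy y) →
      ∃ M : List V, M.Chain' G.Adj ∧ M.head? = some x ∧ M.getLast? = some y ∧
        (∀ z ∈ M, z = x ∨ z = y ∨ z ∈ C) ∧ IndList G M := by
    rintro C c rfl ⟨ux, hux, huxadj⟩ ⟨uy, huy, huyadj⟩
    obtain ⟨w, hw⟩ := hux.symm.trans huy
    have hsupp : ∀ z ∈ w.support, ReachIn G Kᶜ c z :=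
      reachIn_all_support w hw hux
    have hchain : (x :: (w.support ++ [y])).Chain' G.Adj := by
      rw [show List.Chain' G.Adj (x :: (w.support ++ [y])) ↔ _ from List.isChain_cons]
      constructor
      · intro z hz
        rw [List.head?_append_of_ne_nil _ (Walk.support_ne_nil _)] at hz
        rw [w.support_eq_cons] at hz
        simp only [List.head?_cons, Option.mem_def, Option.some.injEq] at hz
        subst hz
        exact huxadj.symm
      · refine List.IsChain.append (Walk.isChain_adj_support w) (by simp) ?_
        intro z hz z' hz'
        rw [List.getLast?_eq_getLast_of_ne_nil (Walk.support_ne_nil _)] at hz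
        simp at hz hz'
        subst hz
        subst hz'
        exact huyadj
    refine extract_indList G (fun z => z = x ∨ z = y ∨ z ∈ {v | ReachIn G Kᶜ c v}) hxy
      _ _ rfl hchain (by simp) ?_ ?_
    · rw [show x :: (w.support ++ [y]) = (x :: w.support) ++ [y] from rfl]
      rw [List.getLast?_append_of_ne_nil _ (by simp)]
      simp
    · intro z hz
      simp only [List.mem_cons, List.mem_append, List.mem_singleton] at hz
      rcases hz with rfl | hz | hz
      · exact Or.inl rfl
      · exact Or.inr (Or.inr (hsupp _ hz))
      · rcases hz with rfl | h
        · exact Or.inr (Or.inl rfl)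
        · simp at h
  obtain ⟨MA, hA1, hA2, hA3, hA4, hA5⟩ := mkM A a rfl
    (min_sep_neighbor hsep hmin hx) (min_sep_neighbor hsep hmin hy)
  obtain ⟨MB, hB1, hB2, hB3, hB4, hB5⟩ := mkM B b rfl
    (min_sep_neighbor hsep.symm hminb hx) (min_sep_neighbor hsep.symm hminb hy)
  exact glue_contradiction hch hxy hnadj hxA hyA hxB hyB hABne
    hA1 hA2 hA3 hA4 hA5 hB1 hB2 hB3 hB4 hB5

lemma isChordal_induce {G : SimpleGraph V} (h : IsChordal G) (s : Set V) :
    IsChordal (G.induce s) := by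
  intro n hn
  refine ⟨fun e => (h n hn).false ((SimpleGraph.Embedding.induce s).comp e)⟩

lemma exists_simplicial_aux :
    ∀ (N : ℕ) {V : Type u} [Fintype V] (G : SimpleGraph V), Fintype.card V ≤ N →
      IsChordal G → ∀ S : Set V, S.Pairwise G.Adj →
      (∃ u w : V, u ≠ w ∧ ¬ G.Adj u w) →
      ∃ v, v ∉ S ∧ (G.neighborSet v).Pairwise G.Adj := by
  intro N
  induction N with
  | zero =>
    intro V _ G hcard _ _ _ hnc
    obtain ⟨u, _, _, _⟩ := hnc
    have := Fintype.card_pos_iff.2 ⟨u⟩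
    omega
  | succ N IH =>
    intro V _ G hcard hch S hS hnc
    obtain ⟨a, b, hab, hnadj⟩ := hnc
    obtain ⟨K, hsep, hmin⟩ := min_sep_exists hab hnadj
    have hK : K.Pairwise G.Adj := min_sep_clique hch hsep hmin
    have main : ∀ (c : V) (C : Set V), C = {v | ReachIn G Kᶜ c v} → c ∉ K →
        (∀ s ∈ S, s ∉ C) → (∃ d, d ∉ C ∧ d ∉ K) →
        ∃ v, v ∉ S ∧ (G.neighborSet v).Pairwise G.Adj := by
      rintro c C rfl hcK hSC ⟨d, hdC, hdK⟩
      have hc : ReachIn G Kᶜ c c := ReachIn.refl hcK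
      set U : Set V := {v | ReachIn G Kᶜ c v} ∪ K with hU
      haveI : DecidablePred (· ∈ U) := Classical.decPred _
      have hdU : d ∉ U := by
        rintro (h | h)
        exacts [hdC h, hdK h]
      have hcardU : Fintype.card ↥U ≤ N := by
        have h1 : Fintype.card ↥U < Fintype.card V := Fintype.card_subtype_lt (p := (· ∈ U)) hdU
        omega
      have hchU : IsChordal (G.induce U) := isChordal_induce hch U
      set K' : Set ↥U := {z | z.1 ∈ K} with hK'
      have hK'clique : K'.Pairwise (G.induce U).Adj := by
        intro p hp q hq hpq
        exact hK hp hq (fun h => hpq (Subtype.ext h))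
      have key : ∀ v' : ↥U, v'.1 ∉ K → ((G.induce U).neighborSet v').Pairwise (G.induce U).Adj →
          ∃ v, v ∉ S ∧ (G.neighborSet v).Pairwise G.Adj := by
        intro v' hv'K hv'simp
        have hv'C : v'.1 ∈ {v | ReachIn G Kᶜ c v} := by
          rcases v'.2 with h | h
          · exact h
          · exact absurd h hv'K
        refine ⟨v'.1, fun h => hSC _ h hv'C, ?_⟩
        intro p hp q hq hpq
        have hmemU : ∀ z, G.Adj v'.1 z → z ∈ U := by
          intro z hz
          by_cases hzK : z ∈ K
          · exact Or.inr hzK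
          · exact Or.inl (hv'C.concat hz hzK)
        have hpU : p ∈ U := hmemU p hp
        have hqU : q ∈ U := hmemU q hq
        have h1 : (⟨p, hpU⟩ : ↥U) ∈ (G.induce U).neighborSet v' := hp
        have h2 : (⟨q, hqU⟩ : ↥U) ∈ (G.induce U).neighborSet v' := hq
        exact hv'simp h1 h2 (fun h => hpq (congrArg Subtype.val h))
      by_cases hcomp : ∃ p q : ↥U, p ≠ q ∧ ¬ (G.induce U).Adj p q
      · obtain ⟨v', hv'K, hv'simp⟩ := IH (G.induce U) hcardU hchU K' hK'clique hcomp
        exact key v' hv'K hv'simp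
      · push_neg at hcomp
        refine key ⟨c, Or.inl hc⟩ hcK ?_
        intro p hp q hq hpq
        exact hcomp p q hpq
    by_cases hSB : ∀ s ∈ S, s ∉ {v | ReachIn G Kᶜ b v}
    · refine main b _ rfl hsep.2.1 hSB ⟨a, ?_, hsep.1⟩
      intro h
      exact hsep.2.2 h.symm
    · push_neg at hSB
      obtain ⟨s, hsS, hsB⟩ := hSB
      refine main a _ rfl hsep.1 ?_ ⟨b, fun h => hsep.2.2 h, hsep.2.1⟩
      intro s' hs' hs'A
      by_cases hss : s' = s
      · subst hss
        exact hsep.2.2 (hs'A.trans hsB.symm)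
      · exact (fun hadj => hsep.2.2 ((hs'A.concat hadj (ReachIn.mem_right hsB)).trans hsB.symm))
          (hS hs' hsS hss)

lemma main_aux :
    ∀ (N : ℕ) {V : Type u} [Fintype V] (G : SimpleGraph V) (t : ℕ),
      Fintype.card V ≤ N → 2 ≤ t → TConnected G t → IsChordal G →
      ∀ (θ : V → ℤ), (∀ x, θ x ≤ (t : ℤ)) →
      ∀ S : Set V, S.ncard = t → (∀ x ∈ S, ∀ y ∈ S, x ≠ y → G.Adj x y) →
      activationClosure G θ S = Set.univ := by
  intro N
  induction N with
  | zero =>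
    intro V _ G t hN ht hconn _ _ _ _ _ _
    exact absurd hconn.1 (by omega)
  | succ N IH =>
    intro V _ G t hN ht hconn hch θ hθ S hScard hSclique
    have hconn' : ∀ K : Set V, K.ncard < t → SetConn G Kᶜ :=
      fun K h => induce_connected_iff_setConn.1 (hconn.2 K h)
    have hdeg : ∀ v, t ≤ (G.neighborSet v).ncard :=
      min_degree_of_conn hconn.1 hconn'
    rw [activationClosure, Set.sInter_eq_univ]
    rintro A ⟨hSA, hclosed⟩
    rw [Set.eq_univ_iff_forall]
    by_cases hcomp : ∃ p q : V, p ≠ q ∧ ¬ G.Adj p q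
    · -- G is not complete
      have hcard2 : t + 2 ≤ Fintype.card V := by
        by_contra h
        obtain ⟨p, q, hpq, hnadj⟩ := hcomp
        exact hnadj (complete_of_card_le ht (by omega) hconn' hpq)
      obtain ⟨v, hvS, hvsimp⟩ := exists_simplicial_aux (Fintype.card V) G le_rfl hch S
        (fun x hx y hy hxy => hSclique x hx y hy hxy) hcomp
      haveI : DecidablePred (· ∈ ({v}ᶜ : Set V)) := Classical.decPred _
      have hcompl : ({v}ᶜ : Set V).ncard = Fintype.card V - 1 := by
        have h1 := Set.ncard_add_ncard_compl ({v} : Set V)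
        rw [Set.ncard_singleton, Nat.card_eq_fintype_card] at h1
        omega
      have hcard' : Fintype.card ↥({v}ᶜ : Set V) = Fintype.card V - 1 := by
        rw [← Nat.card_eq_fintype_card, Nat.card_coe_set_eq, hcompl]
      -- t-connectivity of the graph with v removed
      have hconnv : TConnected (G.induce ({v}ᶜ : Set V)) t := by
        refine ⟨by omega, ?_⟩
        intro K' hK'
        rw [induce_induce_connected_iff]
        set K : Set V := Subtype.val '' K' with hKdef
        have hKcard : K.ncard < t := by
          rwa [hKdef, Set.ncard_image_of_injective _ Subtype.val_injective]
        have himg : Subtype.val '' (K'ᶜ) = Kᶜ ∩ {v}ᶜ := by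
          ext z
          constructor
          · rintro ⟨x, hx, rfl⟩
            refine ⟨?_, x.2⟩
            rintro ⟨y, hy, hyx⟩
            exact hx ((Subtype.val_injective hyx) ▸ hy)
          · rintro ⟨hzK, hzv⟩
            exact ⟨⟨z, hzv⟩, fun h => hzK ⟨⟨z, hzv⟩, h, rfl⟩, rfl⟩
        rw [himg]
        refine setConn_avoid hvsimp (hconn' K hKcard) ?_
        by_contra hne
        rw [Set.not_nonempty_iff_eq_empty] at hne
        have hsub : (Set.univ : Set V) ⊆ K ∪ {v} := by
          intro z _
          by_cases hzK : z ∈ K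
          · exact Or.inl hzK
          · by_cases hzv : z = v
            · exact Or.inr hzv
            · exact absurd (Set.mem_inter hzK hzv : z ∈ Kᶜ ∩ {v}ᶜ) (by rw [hne]; simp)
        have h1 : (Set.univ : Set V).ncard ≤ (K ∪ {v}).ncard :=
          Set.ncard_le_ncard hsub (Set.toFinite _)
        have h2 := Set.ncard_union_le K ({v} : Set V)
        rw [Set.ncard_univ, Nat.card_eq_fintype_card] at h1
        rw [Set.ncard_singleton] at h2
        omega
      -- transfer the seed and the closed set
      set S' : Set ↥({v}ᶜ : Set V) := {x | x.1 ∈ S} with hS'def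
      have hS'img : Subtype.val '' S' = S := by
        ext z
        constructor
        · rintro ⟨x, hx, rfl⟩
          exact hx
        · intro hz
          have hzv : z ∈ ({v}ᶜ : Set V) := by
            simp only [Set.mem_compl_iff, Set.mem_singleton_iff]
            rintro rfl
            exact hvS hz
          exact ⟨⟨z, hzv⟩, hz, rfl⟩
      have hS'card : S'.ncard = t := by
        have := Set.ncard_image_of_injective S' (Subtype.val_injective)
        rw [hS'img] at this
        omega
      have hS'clique : ∀ x ∈ S', ∀ y ∈ S', x ≠ y → (G.induce ({v}ᶜ : Set V)).Adj x y := by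
        intro x hx y hy hxy
        exact hSclique x.1 hx y.1 hy (fun h => hxy (Subtype.ext h))
      have hclosure := IH (G.induce ({v}ᶜ : Set V)) t (by omega) ht hconnv
        (isChordal_induce hch _) (fun x => θ x.1) (fun x => hθ x.1) S' hS'card hS'clique
      set A' : Set ↥({v}ᶜ : Set V) := {x | x.1 ∈ A} with hA'def
      have hA'closed : activationClosed (G.induce ({v}ᶜ : Set V)) (fun x => θ x.1) A' := by
        intro u hu
        have hsub : Subtype.val '' (A' ∩ (G.induce ({v}ᶜ : Set V)).neighborSet u) ⊆
            A ∩ G.neighborSet u.1 := by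
          rintro z ⟨x, ⟨hxA, hxN⟩, rfl⟩
          exact ⟨hxA, hxN⟩
        have hle : (A' ∩ (G.induce ({v}ᶜ : Set V)).neighborSet u).ncard ≤
            (A ∩ G.neighborSet u.1).ncard := by
          rw [← Set.ncard_image_of_injective _ (Subtype.val_injective)]
          exact Set.ncard_le_ncard hsub (Set.toFinite _)
        refine hclosed u.1 (le_trans hu ?_)
        exact_mod_cast hle
      have hA'sup : activationClosure (G.induce ({v}ᶜ : Set V)) (fun x => θ x.1) S' ⊆ A' :=
        Set.sInter_subset_of_mem ⟨fun x hx => hSA hx, hA'closed⟩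
      rw [hclosure] at hA'sup
      have hallbut : ∀ z : V, z ≠ v → z ∈ A := by
        intro z hz
        exact hA'sup (Set.mem_univ (⟨z, by simpa using hz⟩ : ↥({v}ᶜ : Set V)))
      intro w
      by_cases hwv : w = v
      · subst hwv
        refine hclosed w ?_
        have hsub : G.neighborSet w ⊆ A := by
          intro u hu
          exact hallbut u (fun h => G.irrefl (h ▸ hu))
        have : A ∩ G.neighborSet w = G.neighborSet w := Set.inter_eq_self_of_subset_right hsub
        rw [this]
        calc θ w ≤ (t : ℤ) := hθ w
        _ ≤ ((G.neighborSet w).ncard : ℤ) := by exact_mod_cast hdeg w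
      · exact hallbut w hwv
    · -- G is complete
      push_neg at hcomp
      intro w
      by_cases hw : w ∈ S
      · exact hSA hw
      · refine hclosed w ?_
        have hsub : S ⊆ A ∩ G.neighborSet w := by
          intro s hs
          refine ⟨hSA hs, ?_⟩
          have : s ≠ w := fun h => hw (h ▸ hs)
          exact (hcomp w s (fun h => this h.symm)).symm.symm
        have hle : t ≤ (A ∩ G.neighborSet w).ncard := by
          rw [← hScard]
          exact Set.ncard_le_ncard hsub (Set.toFinite _)
        calc θ w ≤ (t : ℤ) := hθ w
        _ ≤ _ := by exact_mod_cast hle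

end TSSAux

theorem clique_seed_activates_chordal {V : Type*} [Fintype V] (G : SimpleGraph V)
    (t : ℕ) (ht : 2 ≤ t) (hconn : TConnected G t) (hchordal : IsChordal G)
    (θ : V → ℤ) (hθ : ∀ x, θ x ≤ (t : ℤ))
    (S : Set V) (hScard : S.ncard = t)
    (hSclique : ∀ x ∈ S, ∀ y ∈ S, x ≠ y → G.Adj x y) :
    activationClosure G θ S = Set.univ :=
  TSSAux.main_aux (Fintype.card V) G t le_rfl ht hconn hchordal θ hθ S hScard hSclique
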